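/- Let N ≥ 3, let e : Fin N → ℝ have pairwise distinct values, let fⱼ (1 ≤ j ≤ N−2) be the vector in ℝ^N whose only nonzero entries are at positions j, j+1, j+2 and equal e_{j+2} − e_{j+1}, e_j − e_{j+2}, e_{j+1} − e_j respectively, and let p : Fin N → ℝ satisfy pₘ > 0 for all m. Define the (N−2)×(N−2) matrix g by g_{jk} = Σₘ₌₁^N f_{jm} f_{km} / pₘ. Then g is positive definite; equivalently, the Hessian matrix of the constrained entropy, whose (j,k) entry is −g_{jk}, is negative definite, so the critical point of the entropy is a maximum. -/

import Mathlib

/-- The complementary vector `fⱼ ∈ ℝᴺ` of an `N`-level system: its only nonzero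
entries are at positions `j, j+1, j+2` (0-indexed) and equal
`e_{j+2} − e_{j+1}`, `e_j − e_{j+2}`, `e_{j+1} − e_j`, respectively. -/
def compVec (N : ℕ) (e : Fin N → ℝ) (j : ℕ) (hj : j + 2 < N) : Fin N → ℝ := fun m =>
  if (m : ℕ) = j then e ⟨j + 2, hj⟩ - e ⟨j + 1, by omega⟩
  else if (m : ℕ) = j + 1 then e ⟨j, by omega⟩ - e ⟨j + 2, hj⟩
  else if (m : ℕ) = j + 2 then e ⟨j + 1, by omega⟩ - e ⟨j, by omega⟩
  else 0

/-- For pairwise distinct reduced energy levels and positive probabilities, the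
`(N−2)×(N−2)` matrix `g_{jk} = Σₘ f_{jm} f_{km} / pₘ` is positive definite;
equivalently the Hessian of the constrained entropy, with entries `−g_{jk}`, is
negative definite, so the critical point of the entropy is a maximum. -/
theorem gram_matrix_posDef_hessian_negDef (N : ℕ) (hN : 3 ≤ N) (e : Fin N → ℝ)
    (hdist : Function.Injective e)
    (p : Fin N → ℝ) (hp : ∀ m, 0 < p m)
    (g : Matrix (Fin (N - 2)) (Fin (N - 2)) ℝ)
    (hg : ∀ j k : Fin (N - 2), g j k =
      ∑ m, compVec N e j (by have := j.2; omega) m *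
        compVec N e k (by have := k.2; omega) m / p m) :
    g.PosDef ∧
    ∀ v : Fin (N - 2) → ℝ, v ≠ 0 → ∑ j, ∑ k, v j * (-g j k) * v k < 0 := by
  have hF2 : ∀ j : Fin (N-2), (j:ℕ) + 2 < N := fun j => by have := j.2; omega
  set F : Fin (N-2) → Fin N → ℝ := fun j => compVec N e j (hF2 j) with hFdef
  have hg' : ∀ j k, g j k = ∑ m, F j m * F k m / p m := fun j k => hg j k
  -- quadratic form identity
  have hquad : ∀ v : Fin (N-2) → ℝ,
      ∑ j, ∑ k, v j * g j k * v k = ∑ m, (∑ j, v j * F j m)^2 / p m := by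
    intro v
    have h : ∀ m, (∑ j, v j * F j m)^2 / p m
        = ∑ j, ∑ k, v j * (F j m * F k m / p m) * v k := by
      intro m
      rw [sq, Finset.sum_mul_sum, Finset.sum_div]
      refine Finset.sum_congr rfl fun j _ => ?_
      rw [Finset.sum_div]
      refine Finset.sum_congr rfl fun k _ => ?_
      ring
    simp_rw [hg', h, Finset.mul_sum, Finset.sum_mul]
    rw [show (∑ x : Fin (N-2), ∑ x_1 : Fin (N-2), ∑ i : Fin N,
          v x * (F x i * F x_1 i / p i) * v x_1)
        = ∑ x : Fin (N-2), ∑ i : Fin N, ∑ x_1 : Fin (N-2),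
          v x * (F x i * F x_1 i / p i) * v x_1 from
      Finset.sum_congr rfl fun j _ => Finset.sum_comm]
    exact Finset.sum_comm
  -- nonvanishing
  have hnz : ∀ v : Fin (N-2) → ℝ, v ≠ 0 → ∃ m, (∑ j, v j * F j m) ≠ 0 := by
    intro v hv
    have hex : ∃ j, v j ≠ 0 := by
      by_contra h; push_neg at h; exact hv (funext h)
    obtain ⟨j1, hj1⟩ := hex
    set S : Finset (Fin (N-2)) := Finset.univ.filter (fun j => v j ≠ 0) with hSdef
    have hS : S.Nonempty := ⟨j1, by simp [hSdef, hj1]⟩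
    set j0 := S.max' hS with hj0def
    have hj0v : v j0 ≠ 0 := (Finset.mem_filter.mp (S.max'_mem hS)).2
    have hmax : ∀ j, j0 < j → v j = 0 := by
      intro j hjgt
      by_contra h
      exact absurd (S.le_max' j (by simp [hSdef, h])) (not_le.mpr hjgt)
    refine ⟨⟨(j0:ℕ) + 2, hF2 j0⟩, ?_⟩
    have hsum : ∑ j, v j * F j ⟨(j0:ℕ)+2, hF2 j0⟩
        = v j0 * (e ⟨(j0:ℕ)+1, by have := hF2 j0; omega⟩ - e ⟨(j0:ℕ), by have := hF2 j0; omega⟩) := by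
      rw [Finset.sum_eq_single j0]
      · congr 1
        show compVec N e j0 (hF2 j0) ⟨(j0:ℕ)+2, hF2 j0⟩ = _
        simp [compVec]
      · intro k _ hk
        rcases lt_or_gt_of_ne hk with hlt | hgt
        · have hkN : (k:ℕ) < (j0:ℕ) := hlt
          have : F k ⟨(j0:ℕ)+2, hF2 j0⟩ = 0 := by
            show compVec N e k (hF2 k) ⟨(j0:ℕ)+2, hF2 j0⟩ = 0
            simp only [compVec]
            rw [if_neg (by omega), if_neg (by omega), if_neg (by omega)]
          rw [this, mul_zero]
        · rw [hmax k hgt, zero_mul]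
      · intro h; exact absurd (Finset.mem_univ j0) h
    rw [hsum]
    refine mul_ne_zero hj0v (sub_ne_zero.mpr ?_)
    intro h
    have := hdist h
    simp only [Fin.mk.injEq] at this
    omega
  have key : ∀ v : Fin (N-2) → ℝ, v ≠ 0 → 0 < ∑ j, ∑ k, v j * g j k * v k := by
    intro v hv
    rw [hquad v]
    obtain ⟨m0, hm0⟩ := hnz v hv
    refine Finset.sum_pos' (fun m _ => div_nonneg (sq_nonneg _) (hp m).le) ⟨m0, Finset.mem_univ m0, ?_⟩
    have : (0:ℝ) < (∑ j, v j * F j m0)^2 := by positivity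
    exact div_pos this (hp m0)
  have hsymm : ∀ j k, g j k = g k j := fun j k => by
    rw [hg', hg']; exact Finset.sum_congr rfl fun m _ => by ring
  constructor
  · constructor
    · ext i j
      simp [Matrix.conjTranspose_apply, hsymm i j]
    · intro x hx
      have := key x (by simpa using hx)
      simpa [dotProduct, Matrix.mulVec, Finset.mul_sum, mul_assoc, Finsupp.sum_fintype] using this
  · intro v hv
    have := key v hv
    have h2 : ∑ j, ∑ k, v j * (-g j k) * v k = -(∑ j, ∑ k, v j * g j k * v k) := by
      rw [← Finset.sum_neg_distrib]
      refine Finset.sum_congr rfl fun j _ => ?_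
      rw [← Finset.sum_neg_distrib]
      exact Finset.sum_congr rfl fun k _ => by ring
    rw [h2]; linarith
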